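/- Let X be a complete separable metric space, (P_n) Borel probability measures on X, and I : X → [0,∞] lower semicontinuous such that for every open set O ⊆ X, liminf_{n→∞} (1/n) log P_n(O) ≥ −inf_{x∈O} I(x). Let F : X → ℝ be bounded and continuous. Then for every open set O ⊆ X, liminf_{n→∞} (1/n) log ∫_O e^{nF(x)} P_n(dx) ≥ sup_{x∈O}[F(x) − I(x)]. -/

import Mathlib

open Filter MeasureTheory Topology

/-- Lower bound half of Varadhan's lemma: given the LDP lower bound for open sets with
rate function `I`, for every bounded continuous `F` and every open set `O`,
`liminf (1/n) log ∫_O e^{nF} dP_n ≥ sup_{x ∈ O} [F x - I x]` (in the extended reals;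
the supremum over the empty set is `-∞`). -/
theorem varadhan_lower_bound
    {X : Type*} [MetricSpace X] [CompleteSpace X] [TopologicalSpace.SeparableSpace X]
    [MeasurableSpace X] [BorelSpace X]
    (P : ℕ → Measure X) (hP : ∀ n, IsProbabilityMeasure (P n))
    (I : X → ENNReal) (hI : LowerSemicontinuous I)
    (hlower : ∀ O : Set X, IsOpen O →
      -(⨅ x ∈ O, (I x : EReal)) ≤
        Filter.liminf (fun n : ℕ => (((n : ℝ)⁻¹ : ℝ) : EReal) * ENNReal.log (P n O)) atTop)
    (F : X → ℝ) (hF : Continuous F) (hFb : ∃ M : ℝ, ∀ x, |F x| ≤ M) :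
    ∀ O : Set X, IsOpen O →
      (⨆ x ∈ O, ((F x : EReal) - (I x : EReal))) ≤
      Filter.liminf
        (fun n : ℕ => (((n : ℝ)⁻¹ : ℝ) : EReal) *
          ENNReal.log (∫⁻ x in O, ENNReal.ofReal (Real.exp (n * F x)) ∂(P n))) atTop := by
  intro O hO
  set L := Filter.liminf
      (fun n : ℕ => (((n : ℝ)⁻¹ : ℝ) : EReal) *
        ENNReal.log (∫⁻ x in O, ENNReal.ofReal (Real.exp (n * F x)) ∂(P n))) atTop with hLdef
  refine iSup₂_le fun x hx => ?_
  have key : ∀ ε : ℝ, 0 < ε → ((F x - ε : ℝ) : EReal) - (I x : EReal) ≤ L := by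
    intro ε hε
    set c : ℝ := F x - ε with hc
    set U : Set X := O ∩ F ⁻¹' (Set.Ioi c) with hU
    have hUopen : IsOpen U := hO.inter (isOpen_Ioi.preimage hF)
    have hxU : x ∈ U := ⟨hx, by simp only [Set.mem_preimage, Set.mem_Ioi, hc]; linarith⟩
    -- the eventual pointwise inequality
    have ev : ∀ᶠ n : ℕ in atTop,
        (c : EReal) + (((n : ℝ)⁻¹ : ℝ) : EReal) * ENNReal.log (P n U) ≤
        (((n : ℝ)⁻¹ : ℝ) : EReal) *
          ENNReal.log (∫⁻ y in O, ENNReal.ofReal (Real.exp (n * F y)) ∂(P n)) := by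
      filter_upwards [eventually_ge_atTop 1] with n hn
      have hnpos : (0 : ℝ) < n := by exact_mod_cast hn
      have hmeas : Measurable fun y => ENNReal.ofReal (Real.exp ((n : ℝ) * F y)) :=
        ENNReal.measurable_ofReal.comp
          (Real.continuous_exp.comp (continuous_const.mul hF)).measurable
      have hint : ENNReal.ofReal (Real.exp ((n : ℝ) * c)) * P n U ≤
          ∫⁻ y in O, ENNReal.ofReal (Real.exp ((n : ℝ) * F y)) ∂(P n) := by
        calc ENNReal.ofReal (Real.exp ((n : ℝ) * c)) * P n U
            = ∫⁻ _ in U, ENNReal.ofReal (Real.exp ((n : ℝ) * c)) ∂(P n) :=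
              (setLIntegral_const _ _).symm
          _ ≤ ∫⁻ y in U, ENNReal.ofReal (Real.exp ((n : ℝ) * F y)) ∂(P n) := by
              refine setLIntegral_mono hmeas fun y hy => ?_
              have : c ≤ F y := (le_of_lt hy.2)
              exact ENNReal.ofReal_le_ofReal (Real.exp_le_exp.2
                (mul_le_mul_of_nonneg_left this hnpos.le))
          _ ≤ ∫⁻ y in O, ENNReal.ofReal (Real.exp ((n : ℝ) * F y)) ∂(P n) :=
              lintegral_mono_set Set.inter_subset_left
      have hlog : (((n : ℝ) * c : ℝ) : EReal) + ENNReal.log (P n U) ≤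
          ENNReal.log (∫⁻ y in O, ENNReal.ofReal (Real.exp ((n : ℝ) * F y)) ∂(P n)) := by
        have := ENNReal.log_monotone hint
        rwa [ENNReal.log_mul_add, ENNReal.log_ofReal_of_pos (Real.exp_pos _),
          Real.log_exp] at this
      have hmul := mul_le_mul_of_nonneg_left hlog
        (EReal.coe_nonneg.2 (by positivity) : (0:EReal) ≤ (((n : ℝ)⁻¹ : ℝ) : EReal))
      refine le_trans (le_of_eq ?_) hmul
      -- compute the product
      rcases eq_or_ne (P n U) 0 with h0 | h0
      · rw [h0, ENNReal.log_zero]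
        rw [EReal.add_bot, EReal.coe_mul_bot_of_pos (by positivity), EReal.add_bot]
      · haveI := hP n
        have hfin : P n U ≠ ⊤ := (measure_lt_top _ _).ne
        have hlogreal : ENNReal.log (P n U) = ((Real.log (P n U).toReal : ℝ) : EReal) :=
          ENNReal.log_pos_real h0 hfin
        rw [hlogreal]
        norm_cast
        field_simp
    -- the final chain
    calc ((F x - ε : ℝ) : EReal) - (I x : EReal)
        ≤ (c : EReal) + -(⨅ y ∈ U, (I y : EReal)) := by
          have hinf : (⨅ y ∈ U, (I y : EReal)) ≤ (I x : EReal) :=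
            iInf₂_le (f := fun y _ => (I y : EReal)) x hxU
          rw [sub_eq_add_neg]
          exact add_le_add_right (EReal.neg_le_neg_iff.2 hinf) _
      _ ≤ (c : EReal) +
            Filter.liminf (fun n : ℕ => (((n : ℝ)⁻¹ : ℝ) : EReal) * ENNReal.log (P n U))
              atTop := add_le_add_right (hlower U hUopen) _
      _ ≤ Filter.liminf (fun n : ℕ =>
            (c : EReal) + (((n : ℝ)⁻¹ : ℝ) : EReal) * ENNReal.log (P n U)) atTop := by
          have h := EReal.le_liminf_add (f := atTop) (u := fun _ : ℕ => (c : EReal))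
            (v := fun n : ℕ => (((n : ℝ)⁻¹ : ℝ) : EReal) * ENNReal.log (P n U))
          rwa [liminf_const] at h
      _ ≤ L := liminf_le_liminf ev
  -- conclude using density of reals
  rcases eq_or_ne (I x) ⊤ with hIx | hIx
  · rw [hIx, sub_eq_add_neg]; simp
  · lift I x to NNReal using hIx with r hr
    rw [EReal.coe_nnreal_eq_coe_real] at key ⊢
    refine le_of_forall_lt_imp_le_of_dense fun z hz => ?_
    obtain ⟨q, hq1, hq2⟩ := EReal.exists_between_coe_real hz
    have hqlt : q < F x - (r : ℝ) := by exact_mod_cast hq2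
    have hε : 0 < F x - (r : ℝ) - q := by linarith
    refine le_trans hq1.le (le_trans (le_of_eq ?_) (key _ hε))
    norm_cast
    ring
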